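/- Let G = (V, E, w) be a finite simple undirected graph with positive real edge weights, with its n ≥ 2 vertices labeled injectively by integers in {0, …, n−1}, and let x ∈ V. For each i ∈ {1, …, ⌈log₂ n⌉} let G_i be the graph obtained from G by the bit-sampling split of x (as in the context). Then: (a) for every simple cycle C through x in G there exists i ∈ {1, …, ⌈log₂ n⌉} such that replacing the two occurrences of x on C by x_{0,i} and x_{1,i} (in the appropriate order) yields a simple path from x_{0,i} to x_{1,i} in G_i of the same total weight as C; and (b) conversely, every simple path from x_{0,i} to x_{1,i} in G_i yields, upon identifying x_{0,i} and x_{1,i} with x, a simple cycle through x in G of the same total weight. -/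

import Mathlib

namespace Stmt13

/-- The weight of a walk: the sum of the weights of its edges. -/
def walkWt {α : Type*} {H : SimpleGraph α} (w : Sym2 α → ℝ) {x y : α} (p : H.Walk x y) : ℝ :=
  (p.edges.map w).sum

/-- The map identifying the two split copies `x_{0,i} = inr false` and `x_{1,i} = inr true`
with `x`, and every other vertex with itself. -/
def stripX {V : Type*} (x : V) : ({v : V // v ≠ x} ⊕ Bool) → V :=
  Sum.elim Subtype.val (fun _ => x)

/-- The bit-sampling split `G_i` of `G` at the vertex `x`: delete `x`, add two new vertices
`x_{0,i} = inr false` and `x_{1,i} = inr true`; every neighbor `y` of `x` is joined to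
`x_{0,i}` if the `i`-th bit of `y`'s label is `0`, and to `x_{1,i}` otherwise; all edges of
`G` not incident to `x` are kept. -/
def Gsplit {V : Type*} (G : SimpleGraph V) (label : V → ℕ) (x : V) (i : ℕ) :
    SimpleGraph ({v : V // v ≠ x} ⊕ Bool) where
  Adj a b := match a, b with
    | Sum.inl u, Sum.inl v => G.Adj u.1 v.1
    | Sum.inl u, Sum.inr b => G.Adj x u.1 ∧ (label u.1).testBit (i - 1) = b
    | Sum.inr b, Sum.inl u => G.Adj x u.1 ∧ (label u.1).testBit (i - 1) = b
    | Sum.inr _, Sum.inr _ => False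
  symm := by
    constructor
    rintro (u | u) (v | v) h
    · exact h.symm
    · exact h
    · exact h
    · exact h.elim
  loopless := by
    constructor
    rintro (u | u) h
    · exact G.loopless.irrefl u.1 h
    · exact h.elim


section Helpers

variable {V : Type*}

@[simp] lemma gsplit_adj_ll {G : SimpleGraph V} {label : V → ℕ} {x : V} {i : ℕ}
    {u v : {v : V // v ≠ x}} :
    (Gsplit G label x i).Adj (Sum.inl u) (Sum.inl v) ↔ G.Adj u.1 v.1 := Iff.rfl

@[simp] lemma gsplit_adj_lr {G : SimpleGraph V} {label : V → ℕ} {x : V} {i : ℕ}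
    {u : {v : V // v ≠ x}} {b : Bool} :
    (Gsplit G label x i).Adj (Sum.inl u) (Sum.inr b) ↔
      G.Adj x u.1 ∧ (label u.1).testBit (i - 1) = b := Iff.rfl

@[simp] lemma gsplit_adj_rl {G : SimpleGraph V} {label : V → ℕ} {x : V} {i : ℕ}
    {u : {v : V // v ≠ x}} {b : Bool} :
    (Gsplit G label x i).Adj (Sum.inr b) (Sum.inl u) ↔
      G.Adj x u.1 ∧ (label u.1).testBit (i - 1) = b := Iff.rfl

@[simp] lemma gsplit_adj_rr {G : SimpleGraph V} {label : V → ℕ} {x : V} {i : ℕ}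
    {b b' : Bool} :
    (Gsplit G label x i).Adj (Sum.inr b) (Sum.inr b') ↔ False := Iff.rfl

/-- `stripX` as a graph homomorphism from the split graph back to `G`. -/
def stripHom (G : SimpleGraph V) (label : V → ℕ) (x : V) (i : ℕ) :
    Gsplit G label x i →g G where
  toFun := stripX x
  map_rel' := by
    rintro (u | u) (v | v) h
    · exact h
    · exact h.1.symm
    · exact h.1
    · exact h.elim

/-- Lift a walk of `G` avoiding `x` into the split graph. -/
def liftW (G : SimpleGraph V) (label : V → ℕ) (x : V) (i : ℕ) :
    ∀ {a b : V} (r : G.Walk a b) (hr : ∀ v ∈ r.support, v ≠ x),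
      (Gsplit G label x i).Walk (Sum.inl ⟨a, hr a r.start_mem_support⟩)
        (Sum.inl ⟨b, hr b r.end_mem_support⟩)
  | _, _, SimpleGraph.Walk.nil, _ => SimpleGraph.Walk.nil
  | _, _, @SimpleGraph.Walk.cons _ _ a c _ h p, hr =>
      SimpleGraph.Walk.cons
        (show (Gsplit G label x i).Adj (Sum.inl ⟨a, hr a (by simp)⟩)
          (Sum.inl ⟨c, hr c (by simp)⟩) from h)
        (liftW G label x i p (fun v hv => hr v (by simp [hv])))

lemma liftW_edges (G : SimpleGraph V) (label : V → ℕ) (x : V) (i : ℕ)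
    {a b : V} (r : G.Walk a b) (hr : ∀ v ∈ r.support, v ≠ x) :
    (liftW G label x i r hr).edges.map (Sym2.map (stripX x)) = r.edges := by
  induction r with
  | nil => rfl
  | cons h p ih =>
    simp only [liftW, SimpleGraph.Walk.edges_cons, List.map_cons, ih]
    congr 1

lemma liftW_support (G : SimpleGraph V) (label : V → ℕ) (x : V) (i : ℕ)
    {a b : V} (r : G.Walk a b) (hr : ∀ v ∈ r.support, v ≠ x) :
    (liftW G label x i r hr).support.map (stripX x) = r.support := by
  induction r with
  | nil => rfl
  | cons h p ih =>
    simp only [liftW, SimpleGraph.Walk.support_cons, List.map_cons, ih]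
    congr 1

lemma liftW_isLeft (G : SimpleGraph V) (label : V → ℕ) (x : V) (i : ℕ)
    {a b : V} (r : G.Walk a b) (hr : ∀ v ∈ r.support, v ≠ x) :
    ∀ s ∈ (liftW G label x i r hr).support, s.isLeft := by
  induction r with
  | nil => rintro s hs; simp [liftW] at hs; subst hs; rfl
  | cons h p ih =>
    rintro s hs
    simp [liftW] at hs
    rcases hs with hs | hs
    · subst hs; rfl
    · exact ih _ s hs

lemma walkWt_aux {α β : Type*} {H : SimpleGraph α} {H' : SimpleGraph β} (f : β → α)
    (w : Sym2 α → ℝ) {a b : β} {c d : α} (P : H'.Walk a b) (Q : H.Walk c d)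
    (h : P.edges.map (Sym2.map f) = Q.edges) :
    walkWt (fun e => w (Sym2.map f e)) P = walkWt w Q := by
  unfold walkWt
  rw [← h, List.map_map]
  rfl

lemma walkWt_reverse {α : Type*} {H : SimpleGraph α} (w : Sym2 α → ℝ) {a b : α}
    (p : H.Walk a b) : walkWt w p.reverse = walkWt w p := by
  unfold walkWt
  rw [SimpleGraph.Walk.edges_reverse, List.map_reverse, List.sum_reverse]

lemma exists_testBit_ne {m m' n : ℕ} (h : m ≠ m') (hm : m < n) (hm' : m' < n) :
    ∃ j < Nat.clog 2 n, m.testBit j ≠ m'.testBit j := by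
  by_contra hc
  push_neg at hc
  apply h
  apply Nat.eq_of_testBit_eq
  intro j
  rcases lt_or_ge j (Nat.clog 2 n) with hj | hj
  · exact hc j hj
  · have hp : n ≤ 2 ^ j :=
      le_trans (Nat.le_pow_clog one_lt_two n) (Nat.pow_le_pow_right (by norm_num) hj)
    rw [Nat.testBit_eq_false_of_lt (lt_of_lt_of_le hm hp),
      Nat.testBit_eq_false_of_lt (lt_of_lt_of_le hm' hp)]

lemma exists_path_of_parts (G : SimpleGraph V) (label : V → ℕ) (x : V) (j : ℕ)
    {a b : V} (hadj : G.Adj x a) (hadj' : G.Adj b x)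
    (r : G.Walk a b) (hr : ∀ v ∈ r.support, v ≠ x) (hnd : r.support.Nodup)
    (hba : (label a).testBit j = false) (hbb : (label b).testBit j = true) :
    ∃ P : (Gsplit G label x (j+1)).Walk (Sum.inr false) (Sum.inr true),
      P.IsPath ∧ P.edges.map (Sym2.map (stripX x)) =
        (SimpleGraph.Walk.cons hadj (r.concat hadj')).edges := by
  have ha : a ≠ x := hr a r.start_mem_support
  have hb : b ≠ x := hr b r.end_mem_support
  have e1 : (Gsplit G label x (j+1)).Adj (Sum.inr false) (Sum.inl ⟨a, ha⟩) := ⟨hadj, hba⟩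
  have e2 : (Gsplit G label x (j+1)).Adj (Sum.inl ⟨b, hb⟩) (Sum.inr true) := ⟨hadj'.symm, hbb⟩
  refine ⟨SimpleGraph.Walk.cons e1 ((liftW G label x (j+1) r hr).concat e2), ?_, ?_⟩
  · rw [SimpleGraph.Walk.isPath_def]
    rw [SimpleGraph.Walk.support_cons, SimpleGraph.Walk.support_concat]
    have hL := liftW_isLeft G label x (j+1) r hr
    have hnd' : (liftW G label x (j+1) r hr).support.Nodup := by
      have := liftW_support G label x (j+1) r hr
      exact List.Nodup.of_map _ (this ▸ hnd)
    simp only [List.concat_eq_append, List.nodup_cons, List.mem_append, List.mem_singleton,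
      List.nodup_append, List.nodup_singleton, List.mem_singleton]
    refine ⟨?_, hnd', ?_, ?_⟩
    · rintro (h | h)
      · exact absurd (hL _ h) (by simp)
      · simp at h
    · simp
    · intro s hs t ht
      subst ht
      intro hs'
      subst hs'
      exact absurd (hL _ hs) (by simp)
  · rw [SimpleGraph.Walk.edges_cons, SimpleGraph.Walk.edges_concat,
      SimpleGraph.Walk.edges_cons, SimpleGraph.Walk.edges_concat]
    simp only [List.concat_eq_append, List.map_append, List.map_cons, List.map_nil]
    rw [liftW_edges]
    congr 1

lemma part_a (G : SimpleGraph V) (label : V → ℕ) (x : V) (n : ℕ) (w : Sym2 V → ℝ)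
    (hinj : Function.Injective label) (hlab : ∀ v, label v < n)
    {a b : V} (hadj : G.Adj x a) (hadj' : G.Adj b x) (r : G.Walk a b)
    (hC : (SimpleGraph.Walk.cons hadj (r.concat hadj')).IsCycle) :
    ∃ i, 1 ≤ i ∧ i ≤ Nat.clog 2 n ∧
      ∃ P : (Gsplit G label x i).Walk (Sum.inr false) (Sum.inr true),
        P.IsPath ∧
        (P.edges.map (Sym2.map (stripX x)) =
            (SimpleGraph.Walk.cons hadj (r.concat hadj')).edges ∨
          P.edges.map (Sym2.map (stripX x)) =
            (SimpleGraph.Walk.cons hadj (r.concat hadj')).reverse.edges) ∧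
        walkWt (fun e => w (Sym2.map (stripX x) e)) P =
          walkWt w (SimpleGraph.Walk.cons hadj (r.concat hadj')) := by
  have hnd' := hC.support_nodup
  rw [SimpleGraph.Walk.support_cons, List.tail_cons, SimpleGraph.Walk.support_concat,
    List.nodup_append] at hnd'
  have hnd : r.support.Nodup := hnd'.1
  have hr : ∀ v ∈ r.support, v ≠ x := by
    intro v hv hvx
    exact hnd'.2.2 v hv x (by simp) hvx
  have hab : a ≠ b := by
    intro h
    subst h
    have hrnil : r = SimpleGraph.Walk.nil :=
      SimpleGraph.Walk.isPath_iff_eq_nil.mp (SimpleGraph.Walk.IsPath.mk' hnd)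
    subst hrnil
    have := hC.three_le_length
    simp at this
  obtain ⟨j, hj, hne⟩ := exists_testBit_ne (fun h => hab (hinj h)) (hlab a) (hlab b)
  refine ⟨j + 1, by omega, by omega, ?_⟩
  cases hA : (label a).testBit j with
  | false =>
    have hB : (label b).testBit j = true := by
      rw [hA] at hne
      exact (Bool.not_eq_false _).mp (Ne.symm hne)
    obtain ⟨P, hP, hE⟩ := exists_path_of_parts G label x j hadj hadj' r hr hnd hA hB
    exact ⟨P, hP, Or.inl hE, walkWt_aux _ w P _ hE⟩
  | true =>
    have hB : (label b).testBit j = false := by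
      rw [hA] at hne
      exact (Bool.not_eq_true _).mp (Ne.symm hne)
    have hr' : ∀ v ∈ r.reverse.support, v ≠ x := by
      intro v hv
      exact hr v (by rwa [SimpleGraph.Walk.support_reverse, List.mem_reverse] at hv)
    have hnd2 : r.reverse.support.Nodup := by
      rw [SimpleGraph.Walk.support_reverse]
      exact List.nodup_reverse.mpr hnd
    obtain ⟨P, hP, hE⟩ :=
      exists_path_of_parts G label x j hadj'.symm hadj.symm r.reverse hr' hnd2 hB hA
    have hrev : (SimpleGraph.Walk.cons hadj (r.concat hadj')).reverse =
        SimpleGraph.Walk.cons hadj'.symm (r.reverse.concat hadj.symm) := by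
      rw [SimpleGraph.Walk.reverse_cons, SimpleGraph.Walk.reverse_concat]
      simp [SimpleGraph.Walk.concat_eq_append, SimpleGraph.Walk.cons_append]
    rw [← hrev] at hE
    refine ⟨P, hP, Or.inr hE, ?_⟩
    rw [walkWt_aux _ w P _ hE, walkWt_reverse]

set_option maxHeartbeats 2000000 in
lemma strip_edge_inj (G : SimpleGraph V) (label : V → ℕ) (x : V) (i : ℕ) :
    ∀ e1 ∈ (Gsplit G label x i).edgeSet, ∀ e2 ∈ (Gsplit G label x i).edgeSet,
      Sym2.map (stripX x) e1 = Sym2.map (stripX x) e2 → e1 = e2 := by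
  rintro e1 h1 e2 h2 h
  induction e1 using Sym2.ind with | _ p q => ?_
  induction e2 using Sym2.ind with | _ p' q' => ?_
  rw [SimpleGraph.mem_edgeSet] at h1 h2
  rcases p with ⟨u, hu⟩ | c <;> rcases q with ⟨v, hv⟩ | d <;>
    rcases p' with ⟨u', hu'⟩ | c' <;> rcases q' with ⟨v', hv'⟩ | d' <;>
    simp_all [stripX, Sym2.map_pair_eq, Sym2.eq_iff] <;> aesop

lemma part_b (G : SimpleGraph V) (label : V → ℕ) (x : V) (i : ℕ)
    (P : (Gsplit G label x i).Walk (Sum.inr false) (Sum.inr true)) (hP : P.IsPath) :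
    ∃ D : G.Walk x x, D.IsCycle ∧ D.edges = P.edges.map (Sym2.map (stripX x)) := by
  refine ⟨P.map (stripHom G label x i), ?_, SimpleGraph.Walk.edges_map _ _⟩
  have hedges : (P.map (stripHom G label x i)).edges = P.edges.map (Sym2.map (stripX x)) :=
    SimpleGraph.Walk.edges_map _ _
  have hfmem : ∀ e ∈ P.edges, e ∈ (Gsplit G label x i).edgeSet :=
    fun e he => P.edges_subset_edgeSet he
  refine ⟨⟨⟨?_⟩, ?_⟩, ?_⟩
  · refine (congrArg List.Nodup hedges).mpr ?_
    exact List.Nodup.map_on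
      (fun e he e' he' hh => strip_edge_inj G label x i e (hfmem e he) e' (hfmem e' he') hh)
      hP.isTrail.edges_nodup
  · cases P with
    | cons h q =>
      simp [SimpleGraph.Walk.map_cons]
      intro hh
      cases hh
  · cases P with
    | cons h q =>
      have hsup := hP.support_nodup
      rw [SimpleGraph.Walk.support_cons, List.nodup_cons] at hsup
      have hs2 : ((SimpleGraph.Walk.cons h q).map (stripHom G label x i)).support.tail =
          q.support.map (stripX x) := by
        rw [SimpleGraph.Walk.map_cons, SimpleGraph.Walk.support_cons, List.tail_cons,
          SimpleGraph.Walk.support_map]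
        rfl
      refine (congrArg List.Nodup hs2).mpr ?_
      refine List.Nodup.map_on ?_ hsup.2
      intro y hy z hz hyz
      have hyf : y ≠ Sum.inr false := fun hh => hsup.1 (hh ▸ hy)
      have hzf : z ≠ Sum.inr false := fun hh => hsup.1 (hh ▸ hz)
      rcases y with ⟨u, hu⟩ | c
      · rcases z with ⟨v, hv⟩ | d
        · simp only [stripX, Sum.elim_inl] at hyz
          subst hyz
          rfl
        · simp only [stripX, Sum.elim_inl, Sum.elim_inr] at hyz
          exact absurd hyz hu
      · rcases z with ⟨v, hv⟩ | d
        · simp only [stripX, Sum.elim_inl, Sum.elim_inr] at hyz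
          exact absurd hyz.symm hv
        · have hc : c = true := by
            cases c
            · exact absurd rfl hyf
            · rfl
          have hd : d = true := by
            cases d
            · exact absurd rfl hzf
            · rfl
          subst hc
          subst hd
          rfl

end Helpers

/-- `G` with positive real edge weights, its `n ≥ 2` vertices labeled
injectively by `{0, …, n-1}`, and `x ∈ V`.  The weight of an edge of `G_i` is the weight of
the corresponding edge of `G` (under the identification `stripX`).  Then:
(a) for every simple cycle `C` through `x` in `G` there is `i ∈ {1, …, ⌈log₂ n⌉}` such that
replacing the two occurrences of `x` on `C` by `x_{0,i}` and `x_{1,i}` (in the appropriate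
order) yields a simple path from `x_{0,i}` to `x_{1,i}` in `G_i` (its edges project to the
edges of `C`, in order or in reverse order) of the same total weight as `C`; and
(b) conversely, every simple path from `x_{0,i}` to `x_{1,i}` in `G_i` yields, upon
identifying `x_{0,i}` and `x_{1,i}` with `x`, a simple cycle through `x` in `G` of the same
total weight. -/
theorem stmt13 {V : Type*} [Fintype V] [DecidableEq V] (G : SimpleGraph V)
    (w : Sym2 V → ℝ) (hw : ∀ e ∈ G.edgeSet, 0 < w e)
    (hn : 2 ≤ Fintype.card V)
    (label : V → ℕ) (hinj : Function.Injective label)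
    (hlab : ∀ v, label v < Fintype.card V)
    (x : V) :
    (∀ C : G.Walk x x, C.IsCycle →
      ∃ i, 1 ≤ i ∧ i ≤ Nat.clog 2 (Fintype.card V) ∧
        ∃ P : (Gsplit G label x i).Walk (Sum.inr false) (Sum.inr true),
          P.IsPath ∧
          (P.edges.map (Sym2.map (stripX x)) = C.edges ∨
            P.edges.map (Sym2.map (stripX x)) = C.reverse.edges) ∧
          walkWt (fun e => w (Sym2.map (stripX x) e)) P = walkWt w C) ∧
    (∀ i, 1 ≤ i → i ≤ Nat.clog 2 (Fintype.card V) →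
      ∀ P : (Gsplit G label x i).Walk (Sum.inr false) (Sum.inr true), P.IsPath →
        ∃ D : G.Walk x x, D.IsCycle ∧
          D.edges = P.edges.map (Sym2.map (stripX x)) ∧
          walkWt w D = walkWt (fun e => w (Sym2.map (stripX x) e)) P) := by
  constructor
  · intro C hC
    cases C with
    | nil => exact absurd rfl hC.ne_nil
    | cons hadj q =>
      cases q with
      | nil =>
        have := hC.three_le_length
        simp at this
      | cons hadj2 q2 =>
        obtain ⟨b, r, hadj', heq⟩ := SimpleGraph.Walk.exists_cons_eq_concat hadj2 q2
        rw [heq] at hC ⊢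
        exact part_a G label x (Fintype.card V) w hinj hlab hadj hadj' r hC
  · intro i _ _ P hP
    obtain ⟨D, hD, hDe⟩ := part_b G label x i P hP
    exact ⟨D, hD, hDe, (walkWt_aux (stripX x) w P D hDe.symm).symm⟩


end Stmt13
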